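/- Let (G, d) be a metric space, T: G → G, S = Fix T nonempty, and suppose T satisfies: (i) d²(Tx, s) ≤ (1+ε)d²(x, s) − ((1−α)/α)ψ(x, s) for all x ∈ G, s ∈ S, where ψ(x,s) ≥ 0; and (ii) metric subregularity: d(x, S) ≤ r·√(ψ(x, x_S)) for x_S a nearest point of S to x, with constant r satisfying √((1−α)/(α(1+ε))) ≤ r < √((1−α)/(αε)). Then d(Tx, S) ≤ c·d(x, S) for all x ∈ G, where c = √(1 + ε − (1−α)/(r²α)) < 1; i.e., the distance to the fixed point set contracts Q-linearly under T. -/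

import Mathlib

open Metric

/-- If `T` is almost α-firmly nonexpansive toward its fixed point set `S` with
nonnegative transport discrepancy `ψ`, and `ψ` is metrically subregular in the sense
that `d(x, S) ≤ r·√(ψ(x, x_S))` for a nearest point `x_S`, with
`√((1−α)/(α(1+ε))) ≤ r < √((1−α)/(αε))`, then `d(Tx, S) ≤ c·d(x, S)` with
`c = √(1 + ε − (1−α)/(r²α)) < 1`. -/
theorem stmt17
    {G : Type*} [MetricSpace G]
    (T : G → G) (S : Set G) (hS : S.Nonempty)
    (hSfix : S = {x : G | T x = x})
    (ψ : G → G → ℝ) (hψ : ∀ x : G, ∀ s ∈ S, 0 ≤ ψ x s)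
    (α ε r : ℝ) (hα : 0 < α ∧ α < 1) (hε : 0 ≤ ε) (hr : 0 < r)
    (hfne : ∀ x : G, ∀ s ∈ S,
      dist (T x) s ^ 2 ≤ (1 + ε) * dist x s ^ 2 - ((1 - α) / α) * ψ x s)
    (proj : G → G) (hproj : ∀ x : G, proj x ∈ S ∧ dist x (proj x) = infDist x S)
    (hsub : ∀ x : G, infDist x S ≤ r * Real.sqrt (ψ x (proj x)))
    (hrlo : Real.sqrt ((1 - α) / (α * (1 + ε))) ≤ r)
    (hrhi : 0 < ε → r < Real.sqrt ((1 - α) / (α * ε))) :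
    (∀ x : G,
      infDist (T x) S ≤
        Real.sqrt (1 + ε - (1 - α) / (r ^ 2 * α)) * infDist x S) ∧
    Real.sqrt (1 + ε - (1 - α) / (r ^ 2 * α)) < 1 := by
  obtain ⟨hα0, hα1⟩ := hα
  have h1α : 0 < 1 - α := by linarith
  have hr2 : (0:ℝ) < r ^ 2 := by positivity
  set c2 : ℝ := 1 + ε - (1 - α) / (r ^ 2 * α) with hc2
  -- lower bound on r gives c2 ≥ 0
  have hrlo2 : (1 - α) / (α * (1 + ε)) ≤ r ^ 2 := by
    calc (1 - α) / (α * (1 + ε)) = Real.sqrt ((1 - α) / (α * (1 + ε))) ^ 2 := by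
          rw [Real.sq_sqrt]; positivity
      _ ≤ r ^ 2 := by
          apply pow_le_pow_left₀ (Real.sqrt_nonneg _) hrlo
  have hc2nn : 0 ≤ c2 := by
    have : (1 - α) / (r ^ 2 * α) ≤ 1 + ε := by
      rw [div_le_iff₀ (by positivity)]
      have := (div_le_iff₀ (by positivity : (0:ℝ) < α * (1 + ε))).mp hrlo2
      nlinarith
    simp only [hc2]; linarith
  have hc2lt : c2 < 1 := by
    rcases eq_or_lt_of_le hε with h0 | hεpos
    · have : 0 < (1 - α) / (r ^ 2 * α) := by positivity
      simp only [hc2, ← h0]; linarith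
    · have hhi := hrhi hεpos
      have hr2lt : r ^ 2 < (1 - α) / (α * ε) := by
        have := pow_lt_pow_left₀ hhi hr.le (two_ne_zero)
        rwa [Real.sq_sqrt (by positivity)] at this
      have : ε < (1 - α) / (r ^ 2 * α) := by
        rw [lt_div_iff₀ (by positivity)]
        have := (lt_div_iff₀ (by positivity : (0:ℝ) < α * ε)).mp hr2lt
        nlinarith
      simp only [hc2]; linarith
  constructor
  · intro x
    obtain ⟨hmem, hdist⟩ := hproj x
    set d : ℝ := infDist x S with hd
    have hdnn : 0 ≤ d := infDist_nonneg
    -- ψ lower bound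
    have hψlb : d ^ 2 / r ^ 2 ≤ ψ x (proj x) := by
      have h := hsub x
      have h2 : d ^ 2 ≤ (r * Real.sqrt (ψ x (proj x))) ^ 2 := by
        apply pow_le_pow_left₀ hdnn h
      rw [mul_pow, Real.sq_sqrt (hψ x _ hmem)] at h2
      rw [div_le_iff₀ hr2]
      linarith [h2]
    have key : infDist (T x) S ^ 2 ≤ c2 * d ^ 2 := by
      have h1 : infDist (T x) S ≤ dist (T x) (proj x) := infDist_le_dist_of_mem hmem
      have h2 : infDist (T x) S ^ 2 ≤ dist (T x) (proj x) ^ 2 :=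
        pow_le_pow_left₀ infDist_nonneg h1 2
      have h3 := hfne x (proj x) hmem
      rw [hdist] at h3
      have h4 : ((1 - α) / α) * (d ^ 2 / r ^ 2) ≤ ((1 - α) / α) * ψ x (proj x) :=
        mul_le_mul_of_nonneg_left hψlb (by positivity)
      have : c2 * d ^ 2 = (1 + ε) * d ^ 2 - ((1 - α) / α) * (d ^ 2 / r ^ 2) := by
        rw [hc2]; field_simp
      rw [this]
      linarith
    calc infDist (T x) S = Real.sqrt (infDist (T x) S ^ 2) := by
          rw [Real.sqrt_sq infDist_nonneg]
      _ ≤ Real.sqrt (c2 * d ^ 2) := Real.sqrt_le_sqrt key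
      _ = Real.sqrt c2 * d := by
          rw [Real.sqrt_mul hc2nn, Real.sqrt_sq hdnn]
  · calc Real.sqrt c2 < Real.sqrt 1 := by
          apply Real.sqrt_lt_sqrt hc2nn hc2lt
      _ = 1 := Real.sqrt_one
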